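/- If f : R → S is a ring epimorphism and M is a pure injective S-module, then M is pure injective as an R-module. -/

import Mathlib

universe u

/-- A linear map is a pure monomorphism if it is injective and `Hom(A, −)`
preserves exactness of the associated short exact sequence for every finitely
presented module `A`. -/
def IsPureMono (R : Type u) [Ring R] {M N : Type u} [AddCommGroup M] [Module R M]
    [AddCommGroup N] [Module R N] (i : M →ₗ[R] N) : Prop :=
  Function.Injective i ∧
    ∀ (A : Type u) [AddCommGroup A] [Module R A], Module.FinitePresentation R A →
      ∀ h : A →ₗ[R] (N ⧸ LinearMap.range i),
        ∃ h' : A →ₗ[R] N, (LinearMap.range i).mkQ.comp h' = h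

/-- A module is pure injective if every pure monomorphism out of it splits. -/
def IsPureInjectiveModule (R : Type u) [Ring R] (M : Type u) [AddCommGroup M]
    [Module R M] : Prop :=
  ∀ (N : Type u) [AddCommGroup N] [Module R N] (i : M →ₗ[R] N),
    IsPureMono R i → ∃ r : N →ₗ[R] M, r.comp i = LinearMap.id


theorem epi_smul_comm {R S : Type u} [Ring R] [Ring S] (f : R →+* S)
    (hepi : ∀ (T : Type u) [Ring T] (g h : S →+* T), g.comp f = h.comp f → g = h)
    {P Q : Type u} [AddCommGroup P] [AddCommGroup Q] [Module S P] [Module S Q]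
    (φ : P →+ Q) (hφ : ∀ (r : R) (p : P), φ (f r • p) = f r • φ p)
    (s : S) (p : P) : φ (s • p) = s • φ p := by
  classical
  set hmap : S → AddMonoid.End (P × Q) := fun s => AddMonoidHom.mk'
    (fun x : P × Q => ((s • x.1 : P), s • x.2 + φ (s • x.1) - s • φ x.1))
    (by
      intro x y
      ext
      · simp [smul_add]
      · simp only [Prod.fst_add, Prod.snd_add, smul_add, map_add, Prod.mk_add_mk]
        abel) with hhmap
  have happ : ∀ (s : S) (x : P × Q),
      hmap s x = ((s • x.1 : P), s • x.2 + φ (s • x.1) - s • φ x.1) := fun _ _ => rfl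
  set h : S →+* AddMonoid.End (P × Q) :=
    { toFun := hmap
      map_one' := by
        refine AddMonoidHom.ext fun x => ?_
        show hmap 1 x = x
        rw [happ]
        ext
        · simp
        · simp
      map_mul' := by
        intro s t
        refine AddMonoidHom.ext fun x => ?_
        show hmap (s * t) x = hmap s (hmap t x)
        rw [happ, happ, happ]
        ext
        · simp [mul_smul]
        · simp only [mul_smul, smul_add, smul_sub, map_add, map_sub]
          abel
      map_zero' := by
        refine AddMonoidHom.ext fun x => ?_
        show hmap 0 x = (0 : P × Q)
        rw [happ]
        ext
        · simp
        · simp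
      map_add' := by
        intro s t
        refine AddMonoidHom.ext fun x => ?_
        show hmap (s + t) x = hmap s x + hmap t x
        rw [happ, happ, happ]
        ext
        · simp [add_smul]
        · simp only [add_smul, map_add, Prod.mk_add_mk]
          abel } with hh
  have key : Module.toAddMonoidEnd S (P × Q) = h := by
    apply hepi _ _ h
    refine RingHom.ext fun r => AddMonoidHom.ext fun x => ?_
    show (Module.toAddMonoidEnd S (P × Q)) (f r) x = hmap (f r) x
    rw [happ]
    show f r • x = _
    ext
    · simp
    · simp only [Prod.smul_snd]
      rw [hφ]
      abel
  have h2 : (Module.toAddMonoidEnd S (P × Q)) s (p, (0:Q)) = hmap s (p, 0) := by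
    rw [key]; rfl
  have h2' : s • ((p, (0:Q)) : P × Q)
      = (s • p, s • (0:Q) + φ (s • p) - s • φ p) := h2
  have h3 := congrArg Prod.snd h2'
  have h4 : (0 : Q) = φ (s • p) - s • φ p := by
    simpa using h3
  exact sub_eq_zero.mp h4.symm

theorem pure_solvable {R M N : Type u} [Ring R] [AddCommGroup M] [Module R M]
    [AddCommGroup N] [Module R N] (i : M →ₗ[R] N) (hi : IsPureMono R i)
    {ι : Type*} [Fintype ι] {κ : Type u} [Fintype κ] [DecidableEq κ]
    (a : ι → κ → R) (mm : ι → M) (x : κ → N)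
    (hx : ∀ t, ∑ u, a t u • x u = i (mm t)) :
    ∃ v : κ → M, ∀ t, ∑ u, a t u • v u = mm t := by
  classical
  obtain ⟨hinj, hlift⟩ := hi
  set p : Submodule R (κ → R) := Submodule.span R (Set.range a) with hp
  have hfp : Module.FinitePresentation R ((κ → R) ⧸ p) :=
    Module.finitePresentation_of_surjective p.mkQ p.mkQ_surjective
      (by rw [Submodule.ker_mkQ]; exact Submodule.fg_span (Set.finite_range a))
  set π := (LinearMap.range i).mkQ with hπ
  set L0 : (κ → R) →ₗ[R] N := Fintype.linearCombination R x with hL0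
  have hL0app : ∀ c : κ → R, L0 c = ∑ u, c u • x u := fun c => rfl
  have hker : p ≤ LinearMap.ker (π.comp L0) := by
    rw [hp, Submodule.span_le]
    rintro _ ⟨t, rfl⟩
    simp only [SetLike.mem_coe, LinearMap.mem_ker, LinearMap.comp_apply]
    rw [hL0app, hx t, hπ, Submodule.mkQ_apply, Submodule.Quotient.mk_eq_zero]
    exact LinearMap.mem_range_self i (mm t)
  obtain ⟨h', hh'⟩ := hlift ((κ → R) ⧸ p) hfp (p.liftQ (π.comp L0) hker)
  set y : κ → N := fun u => h' (p.mkQ (Pi.single u 1)) with hy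
  have hyx : ∀ u, x u - y u ∈ LinearMap.range i := by
    intro u
    have : π (y u) = π (L0 (Pi.single u 1)) := by
      have := congrArg (fun (ψ : ((κ → R) ⧸ p) →ₗ[R] N ⧸ LinearMap.range i) =>
        ψ (p.mkQ (Pi.single u 1))) hh'
      simpa [hy] using this
    rw [hL0app] at this
    simp only [Pi.single_apply, ite_smul, zero_smul, Finset.sum_ite_eq',
      Finset.mem_univ, if_true, one_smul] at this
    rw [hπ, Submodule.mkQ_apply, Submodule.mkQ_apply] at this
    rw [← Submodule.Quotient.eq]
    exact this.symm
  choose z hz using fun u => hyx u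
  have hrow : ∀ t, ∑ u, a t u • y u = 0 := by
    intro t
    have e1 : ∑ u, a t u • y u = h' (p.mkQ (∑ u, a t u • (Pi.single u (1:R) : κ → R))) := by
      simp only [map_sum, map_smul, hy]
    have e2 : ∑ u, a t u • (Pi.single u (1:R) : κ → R) = a t := by
      have e3 : ∀ u : κ, a t u • (Pi.single u (1:R) : κ → R) = Pi.single u (a t u) := by
        intro u
        ext j
        by_cases hj : j = u
        · subst hj; simp
        · simp [Pi.single_apply, hj]
      rw [Finset.sum_congr rfl fun u _ => e3 u, Finset.univ_sum_single]
    rw [e1, e2, show p.mkQ (a t) = 0 from ?_, map_zero]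
    rw [Submodule.mkQ_apply, Submodule.Quotient.mk_eq_zero, hp]
    exact Submodule.subset_span ⟨t, rfl⟩
  refine ⟨z, fun t => hinj ?_⟩
  have : i (∑ u, a t u • z u) = ∑ u, a t u • (x u - y u) := by
    rw [map_sum]
    exact Finset.sum_congr rfl fun u _ => by rw [map_smul, hz]
  rw [this]
  have : ∑ u, a t u • (x u - y u) = (∑ u, a t u • x u) - ∑ u, a t u • y u := by
    rw [← Finset.sum_sub_distrib]
    exact Finset.sum_congr rfl fun u _ => smul_sub _ _ _
  rw [this, hx, hrow, sub_zero]


theorem trans_solvable {R S M N : Type u} [Ring R] [Ring S] (f : R →+* S)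
    [AddCommGroup M] [Module S M] [Module R M]
    (hM : ∀ (r : R) (m : M), r • m = f r • m)
    [AddCommGroup N] [Module R N]
    (i : M →ₗ[R] N) (hi : IsPureMono R i)
    (K : Submodule S (N →₀ S))
    (hK : K = Submodule.span S ((Finsupp.mapRange (⇑f) (map_zero f)) ''
      {c : N →₀ R | Finsupp.linearCombination R (id : N → N) c = 0}))
    (ι κ : Type u) [Fintype ι] [Fintype κ] (b : ι → κ → S) (mm : ι → M)
    (g : κ → ((N →₀ S) ⧸ K))
    (hg : ∀ t, ∑ u, b t u • g u = K.mkQ (Finsupp.single (i (mm t)) 1)) :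
    ∃ v : κ → M, ∀ t, ∑ u, b t u • v u = mm t := by
  classical
  set Φ : (N →₀ R) → (N →₀ S) := Finsupp.mapRange (⇑f) (map_zero f) with hΦ
  set q : (N →₀ R) →ₗ[R] N := Finsupp.linearCombination R (id : N → N) with hq
  -- lift the g's
  choose γ hγ using fun u => K.mkQ_surjective (g u)
  -- membership in K
  have hmem : ∀ t, (∑ u, b t u • γ u) - Finsupp.single (i (mm t)) (1:S) ∈ K := by
    intro t
    have h1 : K.mkQ (∑ u, b t u • γ u) = K.mkQ (Finsupp.single (i (mm t)) 1) := by
      rw [map_sum]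
      simp only [map_smul, hγ]
      exact hg t
    rw [Submodule.mkQ_apply, Submodule.mkQ_apply, Submodule.Quotient.eq] at h1
    exact h1
  rw [hK] at hmem
  choose nn cc dd hdd using fun t => Submodule.mem_span_set'.mp (hmem t)
  have hd' : ∀ t (v : Fin (nn t)), ∃ dv : N →₀ R, q dv = 0 ∧ Φ dv = (dd t v : N →₀ S) := by
    intro t v
    obtain ⟨dv, hdv1, hdv2⟩ := (dd t v).2
    exact ⟨dv, hdv1, hdv2⟩
  choose d hd1 hd2 using hd'
  -- the finite set of elements of N involved
  set W : Finset N :=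
    ((Finset.univ.biUnion fun u : κ => (γ u).support) ∪
      (Finset.univ.biUnion fun t : ι => Finset.univ.biUnion fun v : Fin (nn t) =>
        (d t v).support)) ∪ Finset.univ.image (fun t : ι => i (mm t)) with hW
  have hWγ : ∀ (u : κ), (γ u).support ⊆ W := by
    intro u
    intro n hn
    rw [hW]
    exact Finset.mem_union_left _ (Finset.mem_union_left _
      (Finset.mem_biUnion.mpr ⟨u, Finset.mem_univ u, hn⟩))
  have hWd : ∀ t (v : Fin (nn t)), (d t v).support ⊆ W := by
    intro t v n hn
    rw [hW]
    exact Finset.mem_union_left _ (Finset.mem_union_right _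
      (Finset.mem_biUnion.mpr ⟨t, Finset.mem_univ t,
        Finset.mem_biUnion.mpr ⟨v, Finset.mem_univ v, hn⟩⟩))
  have hWm : ∀ t : ι, i (mm t) ∈ W := by
    intro t
    rw [hW]
    exact Finset.mem_union_right _ (Finset.mem_image.mpr ⟨t, Finset.mem_univ t, rfl⟩)
  -- a general lemma : sums over W of finsupps supported in W
  have hsumW : ∀ c : N →₀ R, c.support ⊆ W → ∑ j : ↥W, c ↑j • (↑j : N) = q c := by
    intro c hc
    rw [hq, Finsupp.linearCombination_apply, Finsupp.sum]
    rw [Finset.univ_eq_attach, Finset.sum_attach W (fun n => c n • n)]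
    refine (Finset.sum_subset hc fun n _ hn => ?_).symm
    rw [Finsupp.notMem_support_iff.mp hn, zero_smul]
  -- set up the pure-solvability system over R
  set ι' : Type u := (Σ t : ι, Fin (nn t)) ⊕ ι with hι'
  set a' : ι' → ↥W → R := Sum.elim (fun tv j => d tv.1 tv.2 ↑j)
    (fun t j => if i (mm t) = ↑j then 1 else 0) with ha'
  set mm' : ι' → M := Sum.elim (fun _ => 0) mm with hmm'
  have hsys : ∀ t', ∑ j : ↥W, a' t' j • (↑j : N) = i (mm' t') := by
    rintro (⟨t, v⟩ | t)
    · rw [ha', hmm']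
      simp only [Sum.elim_inl]
      rw [hsumW (d t v) (hWd t v), hd1, map_zero]
    · rw [ha', hmm']
      simp only [Sum.elim_inr]
      rw [Finset.sum_eq_single_of_mem (⟨i (mm t), hWm t⟩ : ↥W) (Finset.mem_univ _)]
      · rw [if_pos rfl, one_smul]
      · intro j _ hj
        rw [if_neg, zero_smul]
        intro hji
        exact hj (Subtype.ext hji.symm)
  obtain ⟨v, hv⟩ := pure_solvable i hi a' mm' (fun j : ↥W => (↑j : N)) hsys
  have E1 : ∀ t (vv : Fin (nn t)), ∑ j : ↥W, d t vv ↑j • v j = 0 := by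
    intro t vv
    have := hv (Sum.inl ⟨t, vv⟩)
    rw [ha', hmm'] at this
    simpa using this
  have E2 : ∀ t : ι, v ⟨i (mm t), hWm t⟩ = mm t := by
    intro t
    have := hv (Sum.inr t)
    rw [ha', hmm'] at this
    simp only [Sum.elim_inr] at this
    rw [Finset.sum_eq_single_of_mem (⟨i (mm t), hWm t⟩ : ↥W) (Finset.mem_univ _)] at this
    · rw [if_pos rfl, one_smul] at this
      exact this
    · intro j _ hj
      rw [if_neg, zero_smul]
      intro hji
      exact hj (Subtype.ext hji.symm)
  -- the solution
  refine ⟨fun u => ∑ j : ↥W, γ u ↑j • v j, fun t => ?_⟩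
  -- coefficient identity, from evaluating the K-membership witness at each j
  have hcoef : ∀ j : ↥W, ∑ u, b t u * γ u ↑j =
      (if i (mm t) = ↑j then (1:S) else 0) + ∑ vv, cc t vv * f (d t vv ↑j) := by
    intro j
    have h1 := congrArg (fun ω : N →₀ S => ω ↑j) (hdd t)
    simp only [Finsupp.finset_sum_apply, Finsupp.smul_apply, Finsupp.sub_apply,
      smul_eq_mul] at h1
    have h2 : ∀ vv : Fin (nn t), ((dd t vv : N →₀ S)) ↑j = f (d t vv ↑j) := by
      intro vv
      rw [← hd2 t vv, hΦ, Finsupp.mapRange_apply]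
    simp only [h2] at h1
    rw [Finsupp.single_apply] at h1
    rw [h1]
    abel
  calc ∑ u, b t u • ∑ j : ↥W, γ u ↑j • v j
      = ∑ j : ↥W, (∑ u, b t u * γ u ↑j) • v j := by
        simp only [Finset.smul_sum, smul_smul]
        rw [Finset.sum_comm]
        simp [Finset.sum_smul]
    _ = ∑ j : ↥W, ((if i (mm t) = ↑j then (1:S) else 0) • v j
          + (∑ vv, cc t vv * f (d t vv ↑j)) • v j) := by
        refine Finset.sum_congr rfl fun j _ => ?_
        rw [hcoef j, add_smul]
    _ = mm t := by
        rw [Finset.sum_add_distrib]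
        have part1 : ∑ j : ↥W, (if i (mm t) = ↑j then (1:S) else 0) • v j = mm t := by
          rw [Finset.sum_eq_single_of_mem (⟨i (mm t), hWm t⟩ : ↥W) (Finset.mem_univ _)]
          · rw [if_pos rfl, one_smul, E2]
          · intro j _ hj
            rw [if_neg, zero_smul]
            intro hji
            exact hj (Subtype.ext hji.symm)
        have part2 : ∑ j : ↥W, (∑ vv, cc t vv * f (d t vv ↑j)) • v j = 0 := by
          have : ∀ j : ↥W, (∑ vv, cc t vv * f (d t vv ↑j)) • v j
              = ∑ vv, cc t vv • (f (d t vv ↑j) • v j) := by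
            intro j
            rw [Finset.sum_smul]
            exact Finset.sum_congr rfl fun vv _ => mul_smul _ _ _
          rw [Finset.sum_congr rfl fun j _ => this j, Finset.sum_comm]
          refine Finset.sum_eq_zero fun vv _ => ?_
          rw [← Finset.smul_sum]
          have : ∑ j : ↥W, f (d t vv ↑j) • v j = 0 := by
            rw [← E1 t vv]
            exact Finset.sum_congr rfl fun j _ => (hM _ _).symm
          rw [this, smul_zero]
        rw [part1, part2, add_zero]

/-- If `f : R → S` is a ring epimorphism and `M` is a pure injective
`S`-module, then `M` is pure injective as an `R`-module (via restriction of
scalars along `f`). -/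
theorem ring_epi_pureInjective_restriction {R S : Type u} [Ring R] [Ring S]
    (f : R →+* S)
    (hepi : ∀ (T : Type u) [Ring T] (g h : S →+* T), g.comp f = h.comp f → g = h)
    (M : Type u) [AddCommGroup M] [Module S M] [Module R M]
    (hM : ∀ (r : R) (m : M), r • m = f r • m)
    (hpi : IsPureInjectiveModule S M) :
    IsPureInjectiveModule R M := by
  classical
  intro N _ _ i hi
  set Φ : (N →₀ R) → (N →₀ S) := Finsupp.mapRange (⇑f) (map_zero f) with hΦ
  set q : (N →₀ R) →ₗ[R] N := Finsupp.linearCombination R (id : N → N) with hq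
  set K : Submodule S (N →₀ S) :=
    Submodule.span S (Φ '' {c : N →₀ R | q c = 0}) with hK
  -- basic congruences in the quotient
  have hrel : ∀ c : N →₀ R, q c = 0 → Φ c ∈ K := by
    intro c hc
    rw [hK]
    exact Submodule.subset_span ⟨c, hc, rfl⟩
  have hadd : ∀ n n' : N, K.mkQ (Finsupp.single (n + n') (1:S))
      = K.mkQ (Finsupp.single n 1) + K.mkQ (Finsupp.single n' 1) := by
    intro n n'
    rw [← map_add, Submodule.mkQ_apply, Submodule.mkQ_apply, Submodule.Quotient.eq]
    have : Finsupp.single (n + n') (1:S) - (Finsupp.single n 1 + Finsupp.single n' 1)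
        = Φ (Finsupp.single (n + n') (1:R) - (Finsupp.single n 1 + Finsupp.single n' 1)) := by
      rw [hΦ]
      ext nx
      simp [Finsupp.mapRange_apply, Finsupp.single_apply, apply_ite f]
    rw [this]
    refine hrel _ ?_
    rw [hq]
    simp only [map_sub, map_add, Finsupp.linearCombination_single, id_eq, one_smul]
    abel
  have hsmul : ∀ (r : R) (n : N), K.mkQ (Finsupp.single (r • n) (1:S))
      = f r • K.mkQ (Finsupp.single n 1) := by
    intro r n
    rw [← map_smul, Finsupp.smul_single, smul_eq_mul, mul_one,
      Submodule.mkQ_apply, Submodule.mkQ_apply, Submodule.Quotient.eq]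
    have : Finsupp.single (r • n) (1:S) - Finsupp.single n (f r)
        = Φ (Finsupp.single (r • n) (1:R) - Finsupp.single n r) := by
      rw [hΦ]
      ext nx
      simp [Finsupp.mapRange_apply, Finsupp.single_apply, apply_ite f]
    rw [this]
    refine hrel _ ?_
    rw [hq]
    simp only [map_sub, Finsupp.linearCombination_single, id_eq, one_smul]
    exact sub_self _
  -- the S-linear map j : M → (N →₀ S) ⧸ K
  set j0 : M →+ ((N →₀ S) ⧸ K) := AddMonoidHom.mk'
    (fun m => K.mkQ (Finsupp.single (i m) (1:S)))
    (by
      intro m m'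
      simp only [map_add]
      exact hadd (i m) (i m')) with hj0
  have hj0f : ∀ (r : R) (m : M), j0 (f r • m) = f r • j0 m := by
    intro r m
    have h1 : f r • m = r • m := (hM r m).symm
    rw [h1]
    show K.mkQ (Finsupp.single (i (r • m)) (1:S)) = f r • K.mkQ (Finsupp.single (i m) 1)
    rw [map_smul, hsmul]
  set j : M →ₗ[S] ((N →₀ S) ⧸ K) :=
    { toFun := fun m => K.mkQ (Finsupp.single (i m) (1:S))
      map_add' := fun m m' => by
        simp only [map_add]
        exact hadd (i m) (i m')
      map_smul' := fun s m => epi_smul_comm f hepi j0 hj0f s m } with hj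
  have hjapp : ∀ m : M, j m = K.mkQ (Finsupp.single (i m) (1:S)) := fun m => rfl
  -- injectivity of j
  have hjinj : Function.Injective j := by
    have h0 : ∀ m : M, j m = 0 → m = 0 := by
      intro m hm
      obtain ⟨v, hv⟩ := trans_solvable f hM i hi K hK PUnit.{u+1} PEmpty.{u+1}
        (fun _ e => e.elim) (fun _ => m) (fun e => e.elim)
        (by
          intro t
          rw [Finset.univ_eq_empty, Finset.sum_empty, ← hjapp]
          exact hm.symm)
      have := hv PUnit.unit
      rw [Finset.univ_eq_empty, Finset.sum_empty] at this
      exact this.symm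
    intro m m' hmm'
    have : j (m - m') = 0 := by rw [map_sub, hmm', sub_self]
    have := h0 _ this
    exact sub_eq_zero.mp this
  -- the purity (lifting) property of j
  have hjlift : ∀ (A : Type u) [AddCommGroup A] [Module S A],
      Module.FinitePresentation S A →
      ∀ h : A →ₗ[S] (((N →₀ S) ⧸ K) ⧸ LinearMap.range j),
        ∃ h' : A →ₗ[S] ((N →₀ S) ⧸ K), (LinearMap.range j).mkQ.comp h' = h := by
    intro A _ _ hfp h
    obtain ⟨sA, hsA, hkerA⟩ := hfp
    set πA : (↥sA →₀ S) →ₗ[S] A := Finsupp.linearCombination S ((↑) : ↥sA → A) with hπA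
    have hsurj : Function.Surjective πA := by
      rw [← LinearMap.range_eq_top, hπA, Finsupp.range_linearCombination,
        Subtype.range_val]
      exact hsA
    obtain ⟨tA, htA⟩ := hkerA
    choose g0 hg0 using fun u : ↥sA =>
      (LinearMap.range j).mkQ_surjective (h (πA (Finsupp.single u 1)))
    -- each relation row gives an element of the range of j
    have huniv : ∀ c : ↥sA →₀ S, ∑ u : ↥sA, Finsupp.single u (c u) = c := by
      intro c
      ext u'
      rw [Finsupp.finset_sum_apply]
      simp [Finsupp.single_apply, Finset.sum_ite_eq]
    have hrowmem : ∀ c : ↥tA, ∑ u : ↥sA, (c : ↥sA →₀ S) u • g0 u ∈ LinearMap.range j := by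
      intro c
      rw [← Submodule.ker_mkQ (LinearMap.range j), LinearMap.mem_ker, map_sum]
      have h1 : ∀ u : ↥sA, (LinearMap.range j).mkQ ((c : ↥sA →₀ S) u • g0 u)
          = h (πA (Finsupp.single u ((c : ↥sA →₀ S) u))) := by
        intro u
        rw [map_smul, hg0, ← map_smul, ← map_smul, Finsupp.smul_single, smul_eq_mul,
          mul_one]
      rw [Finset.sum_congr rfl fun u _ => h1 u, ← map_sum, ← map_sum, huniv]
      have : πA (c : ↥sA →₀ S) = 0 := by
        have : (c : ↥sA →₀ S) ∈ LinearMap.ker πA := by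
          rw [← htA]
          exact Submodule.subset_span c.2
        exact this
      rw [this, map_zero]
    choose mmc hmmc using hrowmem
    obtain ⟨v, hv⟩ := trans_solvable f hM i hi K hK (↥tA) (↥sA)
      (fun c u => (c : ↥sA →₀ S) u) mmc g0
      (by
        intro c
        rw [← hjapp, hmmc c])
    set g1 : ↥sA → ((N →₀ S) ⧸ K) := fun u => g0 u - j (v u) with hg1
    set L : (↥sA →₀ S) →ₗ[S] ((N →₀ S) ⧸ K) := Finsupp.linearCombination S g1 with hL
    have hLker : LinearMap.ker πA ≤ LinearMap.ker L := by
      rw [← htA, Submodule.span_le]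
      intro c hc
      simp only [SetLike.mem_coe, LinearMap.mem_ker]
      have hc' : (⟨c, hc⟩ : ↥tA) = ⟨c, hc⟩ := rfl
      rw [hL, ← huniv c, map_sum]
      have h2 : ∀ u : ↥sA, (Finsupp.linearCombination S g1) (Finsupp.single u (c u))
          = c u • g0 u - c u • j (v u) := by
        intro u
        rw [Finsupp.linearCombination_single, hg1, smul_sub]
      rw [Finset.sum_congr rfl fun u _ => h2 u, Finset.sum_sub_distrib]
      have h3 : ∑ u : ↥sA, c u • g0 u = j (mmc ⟨c, hc⟩) := (hmmc ⟨c, hc⟩).symm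
      have h4 : ∑ u : ↥sA, c u • j (v u) = j (mmc ⟨c, hc⟩) := by
        have : ∑ u : ↥sA, c u • j (v u) = j (∑ u : ↥sA, c u • v u) := by
          rw [map_sum]
          exact Finset.sum_congr rfl fun u _ => (map_smul j (c u) (v u)).symm
        rw [this, hv ⟨c, hc⟩]
      rw [h3, h4, sub_self]
    -- descend L along πA
    set e := πA.quotKerEquivOfSurjective hsurj with he
    set h' : A →ₗ[S] ((N →₀ S) ⧸ K) :=
      ((LinearMap.ker πA).liftQ L hLker).comp (e.symm : A →ₗ[S] ((↥sA →₀ S) ⧸ LinearMap.ker πA)) with hh'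
    refine ⟨h', ?_⟩
    apply LinearMap.ext
    intro aa
    obtain ⟨c, rfl⟩ := hsurj aa
    have heq : e (Submodule.Quotient.mk c) = πA c := rfl
    have heq' : e.symm (πA c) = Submodule.Quotient.mk c := by
      rw [← heq, LinearEquiv.symm_apply_apply]
    have hL' : h' (πA c) = L c := by
      rw [hh']
      show ((LinearMap.ker πA).liftQ L hLker) (e.symm (πA c)) = L c
      rw [heq']
      exact Submodule.liftQ_apply _ _ _
    show (LinearMap.range j).mkQ (h' (πA c)) = h (πA c)
    have key2 : (LinearMap.range j).mkQ.comp L = h.comp πA := by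
      refine Finsupp.lhom_ext' fun u => ?_
      refine LinearMap.ext_ring ?_
      show (LinearMap.range j).mkQ (L (Finsupp.single u 1)) = h (πA (Finsupp.single u 1))
      rw [hL, Finsupp.linearCombination_single, one_smul, hg1, map_sub]
      have hz : (LinearMap.range j).mkQ (j (v u)) = 0 := by
        rw [Submodule.mkQ_apply, Submodule.Quotient.mk_eq_zero]
        exact LinearMap.mem_range_self j (v u)
      rw [hz, sub_zero, hg0]
    rw [hL']
    exact LinearMap.congr_fun key2 c
  -- apply pure injectivity of M over S
  obtain ⟨rS, hrS⟩ := hpi ((N →₀ S) ⧸ K) j ⟨hjinj, hjlift⟩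
  refine ⟨{ toFun := fun n => rS (K.mkQ (Finsupp.single n (1:S)))
            map_add' := by
              intro n n'
              show rS (K.mkQ (Finsupp.single (n + n') (1:S)))
                = rS (K.mkQ (Finsupp.single n 1)) + rS (K.mkQ (Finsupp.single n' 1))
              rw [hadd, map_add]
            map_smul' := by
              intro rr n
              show rS (K.mkQ (Finsupp.single (rr • n) (1:S)))
                = rr • rS (K.mkQ (Finsupp.single n 1))
              rw [hsmul, map_smul]
              exact (hM rr _).symm }, ?_⟩
  apply LinearMap.ext
  intro m
  show rS (K.mkQ (Finsupp.single (i m) (1:S))) = m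
  rw [← hjapp]
  exact LinearMap.congr_fun hrS m
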